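/- Define numbers E_{j,m} by the recursion E_{j+1,m} = E_{j,m} − (j²/4) E_{j−1,m−1} for j, m ≥ 1, with E_{j,0} = 1 for all j, and E_{0,m} = E_{1,m} = 0 for m ≥ 1. Then for every j ≥ 0, (qp)^j = ∑_{m=0}^{⌊j/2⌋} E_{j,m} ħ^{2m} (qp)^{⋆(j−2m)}, where (qp)^{⋆k} denotes the k-fold Moyal star power of (qp). -/

import Mathlib

open MvPolynomial

/-- `k`-fold partial derivative in variable `i` of a polynomial symbol in `(q,p)`. -/
noncomputable def pdIter (i : Fin 2) (k : ℕ) (A : MvPolynomial (Fin 2) ℂ) :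
    MvPolynomial (Fin 2) ℂ :=
  (fun B => MvPolynomial.pderiv i B)^[k] A

/-- The bidifferential operator `A 𝒟ⁿ B`, where
`𝒟 = ∂_p ⊗ ∂_q − ∂_q ⊗ ∂_p` (variable `0` is `q`, variable `1` is `p`). -/
noncomputable def moyalD (n : ℕ) (A B : MvPolynomial (Fin 2) ℂ) :
    MvPolynomial (Fin 2) ℂ :=
  ∑ k ∈ Finset.range (n + 1),
    ((-1 : ℂ) ^ k * (n.choose k : ℂ)) •
      (pdIter 0 k (pdIter 1 (n - k) A) * pdIter 1 k (pdIter 0 (n - k) B))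

/-- The Moyal star product `A ⋆ B = ∑ₙ (ihbar)ⁿ/(2ⁿ n!) (A𝒟ⁿB)`; for polynomials the sum
terminates since `A𝒟ⁿB = 0` for `n > totalDegree A`. -/
noncomputable def moyal (hbar : ℝ) (A B : MvPolynomial (Fin 2) ℂ) :
    MvPolynomial (Fin 2) ℂ :=
  ∑ n ∈ Finset.range (A.totalDegree + 1),
    ((Complex.I * (hbar : ℂ)) ^ n / ((2 : ℂ) ^ n * (n.factorial : ℂ))) • moyalD n A B


/-- The `k`-fold Moyal star power of `qp`: `(qp)^{⋆0} = 1`,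
`(qp)^{⋆(k+1)} = (qp) ⋆ (qp)^{⋆k}`. -/
noncomputable def spow (hbar : ℝ) : ℕ → MvPolynomial (Fin 2) ℂ
  | 0 => 1
  | (k + 1) => moyal hbar (X 0 * X 1) (spow hbar k)

lemma tdeg_qp : (X 0 * X 1 : MvPolynomial (Fin 2) ℂ).totalDegree = 2 := by
  rw [X, X, monomial_mul, totalDegree_monomial _ (by norm_num : (1*1 : ℂ) ≠ 0)]
  simp [Finsupp.sum_add_index]
lemma pdIter_zero (i : Fin 2) (A) : pdIter i 0 A = A := rfl
lemma pdIter_succ (i : Fin 2) (k) (A) : pdIter i (k+1) A = pderiv i (pdIter i k A) := by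
  simp [pdIter, Function.iterate_succ_apply']
lemma pdIter_one (i : Fin 2) (A : MvPolynomial (Fin 2) ℂ) : pdIter i 1 A = pderiv i A := by
  rw [pdIter_succ, pdIter_zero]

lemma moyalD_zero (A B : MvPolynomial (Fin 2) ℂ) : moyalD 0 A B = A * B := by
  simp [moyalD, pdIter_zero]

lemma moyalD_one (A B : MvPolynomial (Fin 2) ℂ) : moyalD 1 A B
    = pdIter 1 1 A * pdIter 0 1 B - pdIter 0 1 A * pdIter 1 1 B := by
  rw [moyalD]
  rw [Finset.sum_range_succ, Finset.sum_range_succ, Finset.sum_range_zero]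
  norm_num [pdIter_zero]
  ring

lemma moyalD_two (A B : MvPolynomial (Fin 2) ℂ) : moyalD 2 A B
    = pdIter 1 2 A * pdIter 0 2 B - (2:ℂ) • (pdIter 0 1 (pdIter 1 1 A) * pdIter 1 1 (pdIter 0 1 B))
      + pdIter 0 2 A * pdIter 1 2 B := by
  rw [moyalD]
  rw [Finset.sum_range_succ, Finset.sum_range_succ, Finset.sum_range_succ, Finset.sum_range_zero]
  norm_num [pdIter_zero]
  module

lemma pd1_qp : pderiv 1 (X 0 * X 1 : MvPolynomial (Fin 2) ℂ) = X 0 := by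
  simp [pderiv_mul, pderiv_X_self, pderiv_X_of_ne (show (0:Fin 2) ≠ 1 by decide)]

lemma pd0_qp : pderiv 0 (X 0 * X 1 : MvPolynomial (Fin 2) ℂ) = X 1 := by
  simp [pderiv_mul, pderiv_X_self, pderiv_X_of_ne (show (1:Fin 2) ≠ 0 by decide)]

lemma moyal_qp (hbar : ℝ) (B : MvPolynomial (Fin 2) ℂ) : moyal hbar (X 0 * X 1) B
  = X 0 * X 1 * B + ((Complex.I * hbar)/2) • (X 0 * pderiv 0 B - X 1 * pderiv 1 B)
    + (((hbar:ℂ)^2)/4) • pderiv 1 (pderiv 0 B) := by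
  rw [moyal, tdeg_qp]
  rw [Finset.sum_range_succ, Finset.sum_range_succ, Finset.sum_range_succ, Finset.sum_range_zero]
  rw [moyalD_zero, moyalD_one, moyalD_two]
  simp only [pdIter_succ, pdIter_zero, pd0_qp, pd1_qp,
    pderiv_X_of_ne (show (0:Fin 2) ≠ 1 by decide),
    pderiv_X_of_ne (show (1:Fin 2) ≠ 0 by decide),
    map_zero, zero_mul, mul_zero, one_mul, mul_one, sub_zero, zero_sub, add_zero, zero_add,
    smul_zero, zero_smul, smul_neg, smul_smul]
  norm_num [Nat.factorial]
  match_scalars <;> (ring_nf; norm_num [Complex.I_sq])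

lemma moyal_add (hbar : ℝ) (B C' : MvPolynomial (Fin 2) ℂ) :
    moyal hbar (X 0 * X 1) (B + C') = moyal hbar (X 0 * X 1) B + moyal hbar (X 0 * X 1) C' := by
  simp only [moyal_qp, map_add, smul_eq_C_mul]
  ring

lemma moyal_zero (hbar : ℝ) : moyal hbar (X 0 * X 1) (0 : MvPolynomial (Fin 2) ℂ) = 0 := by
  simp [moyal_qp]

lemma moyal_sum (hbar : ℝ) {α : Type*} (s : Finset α) (f : α → MvPolynomial (Fin 2) ℂ) :
    moyal hbar (X 0 * X 1) (∑ i ∈ s, f i) = ∑ i ∈ s, moyal hbar (X 0 * X 1) (f i) := by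
  classical
  induction s using Finset.induction with
  | empty => simpa using moyal_zero hbar
  | insert _ _ h ih => rw [Finset.sum_insert h, moyal_add, ih, Finset.sum_insert h]

lemma moyal_C_mul (hbar : ℝ) (c : ℂ) (B : MvPolynomial (Fin 2) ℂ) :
    moyal hbar (X 0 * X 1) (C c * B) = C c * moyal hbar (X 0 * X 1) B := by
  simp only [moyal_qp, pderiv_C_mul, smul_eq_C_mul]
  ring

lemma natCast_C (j : ℕ) : ((j+1 : ℕ) : MvPolynomial (Fin 2) ℂ) = C ((j:ℂ)+1) := by
  rw [← C_eq_coe_nat]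
  congr 1
  push_cast
  ring

lemma moyal_qp_pow (hbar : ℝ) (j : ℕ) :
    moyal hbar (X 0 * X 1) ((X 0 * X 1 : MvPolynomial (Fin 2) ℂ) ^ (j+1))
      = (X 0 * X 1) ^ (j+2)
        + C ((((j:ℂ)+1)^2) * (hbar:ℂ)^2/4) * (X 0 * X 1) ^ j := by
  have h0 : pderiv 0 ((X 0 * X 1 : MvPolynomial (Fin 2) ℂ) ^ (j+1))
      = C ((j:ℂ)+1) * ((X 0 * X 1) ^ j * X 1) := by
    rw [pderiv_pow, Nat.add_sub_cancel, pd0_qp, natCast_C, mul_assoc]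
  have h1 : pderiv 1 ((X 0 * X 1 : MvPolynomial (Fin 2) ℂ) ^ (j+1))
      = C ((j:ℂ)+1) * ((X 0 * X 1) ^ j * X 0) := by
    rw [pderiv_pow, Nat.add_sub_cancel, pd1_qp, natCast_C, mul_assoc]
  have h2 : pderiv 1 (pderiv 0 ((X 0 * X 1 : MvPolynomial (Fin 2) ℂ) ^ (j+1)))
      = C (((j:ℂ)+1)^2) * (X 0 * X 1) ^ j := by
    rw [h0, pderiv_C_mul, pderiv_mul, pderiv_pow, pd1_qp, pderiv_X_self]
    cases j with
    | zero => simp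
    | succ n =>
      rw [Nat.add_sub_cancel, natCast_C]
      push_cast
      simp only [map_add, map_pow, map_mul, map_one, map_ofNat]
      ring
  rw [moyal_qp, h2, h0, h1]
  rw [show X 0 * (C ((j:ℂ)+1) * ((X 0 * X 1 : MvPolynomial (Fin 2) ℂ) ^ j * X 1))
      - X 1 * (C ((j:ℂ)+1) * ((X 0 * X 1) ^ j * X 0)) = 0 by ring, smul_zero, add_zero]
  rw [smul_eq_C_mul, show C ((((j:ℂ)+1)^2) * (hbar:ℂ)^2/4)
      = C ((hbar:ℂ)^2/4) * C (((j:ℂ)+1)^2) from by rw [← map_mul]; congr 1; ring]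
  ring

lemma spow_succ' (hbar : ℝ) (k : ℕ) :
    moyal hbar (X 0 * X 1) (spow hbar k) = spow hbar (k+1) := rfl

lemma spow_one (hbar : ℝ) : spow hbar 1 = X 0 * X 1 := by
  show moyal hbar (X 0 * X 1) 1 = X 0 * X 1
  rw [moyal_qp]
  simp

/-- with `E_{j,m}` defined by the recursion
`E_{j+1,m} = E_{j,m} − (j²/4)E_{j−1,m−1}` (`j,m ≥ 1`), `E_{j,0} = 1`,
`E_{0,m} = E_{1,m} = 0` for `m ≥ 1`, one has
`(qp)^j = ∑_{m=0}^{⌊j/2⌋} E_{j,m} ħ^{2m} (qp)^{⋆(j−2m)}`. -/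
theorem qp_pow_in_star_powers (hbar : ℝ) (E : ℕ → ℕ → ℝ)
    (hE0 : ∀ j, E j 0 = 1)
    (hE0m : ∀ m, 1 ≤ m → E 0 m = 0)
    (hE1m : ∀ m, 1 ≤ m → E 1 m = 0)
    (hErec : ∀ j m, 1 ≤ j → 1 ≤ m →
      E (j + 1) m = E j m - ((j : ℝ) ^ 2 / 4) * E (j - 1) (m - 1)) :
    ∀ j : ℕ, (X 0 * X 1 : MvPolynomial (Fin 2) ℂ) ^ j
      = ∑ m ∈ Finset.range (j / 2 + 1),
          MvPolynomial.C ((E j m : ℂ) * (hbar : ℂ) ^ (2 * m)) * spow hbar (j - 2 * m) := by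
  have hvan : ∀ j m, j < 2*m → E j m = 0 := by
    intro j
    induction j using Nat.twoStepInduction with
    | zero => intro m hm; exact hE0m m (by omega)
    | one => intro m hm; exact hE1m m (by omega)
    | more n ih1 ih2 =>
      intro m hm
      rw [hErec (n+1) m (by omega) (by omega)]
      rw [Nat.add_sub_cancel, ih2 m (by omega), ih1 (m-1) (by omega)]
      ring
  have key : ∀ j : ℕ, (X 0 * X 1 : MvPolynomial (Fin 2) ℂ) ^ j
      = ∑ m ∈ Finset.range (j + 1),
          MvPolynomial.C ((E j m : ℂ) * (hbar : ℂ) ^ (2 * m)) * spow hbar (j - 2 * m) := by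
    intro j
    induction j using Nat.twoStepInduction with
    | zero => simp [hE0, spow]
    | one =>
      rw [Finset.sum_range_succ, Finset.sum_range_one]
      rw [hE1m 1 le_rfl, hE0]
      simp [spow_one]
    | more n ih ih1 =>
      have e1 : (X 0 * X 1 : MvPolynomial (Fin 2) ℂ) ^ (n+2)
          = moyal hbar (X 0 * X 1) ((X 0 * X 1) ^ (n+1))
            - C ((((n:ℂ)+1)^2) * (hbar:ℂ)^2/4) * (X 0 * X 1) ^ n := by
        rw [moyal_qp_pow]; ring
      rw [e1, ih1, ih, moyal_sum]
      simp only [moyal_C_mul, spow_succ']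
      rw [Finset.mul_sum]
      have ext1 : ∑ m ∈ Finset.range (n+1+1+1),
            C ((E (n+1) m : ℂ) * (hbar:ℂ) ^ (2*m)) * spow hbar (n+1-2*m+1)
          = ∑ m ∈ Finset.range (n+1+1),
            C ((E (n+1) m : ℂ) * (hbar:ℂ) ^ (2*m)) * spow hbar (n+1-2*m+1) := by
        rw [Finset.sum_range_succ, hvan (n+1) (n+2) (by omega)]
        simp
      have ext2 : ∑ m ∈ Finset.range (n+1+1),
            C ((((n:ℂ)+1)^2) * (hbar:ℂ)^2/4) * (C ((E n m : ℂ) * (hbar:ℂ) ^ (2*m)) * spow hbar (n-2*m))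
          = ∑ m ∈ Finset.range (n+1),
            C ((((n:ℂ)+1)^2) * (hbar:ℂ)^2/4) * (C ((E n m : ℂ) * (hbar:ℂ) ^ (2*m)) * spow hbar (n-2*m)) := by
        rw [Finset.sum_range_succ, hvan n (n+1) (by omega)]
        simp
      rw [← ext1, ← ext2]
      rw [Finset.sum_range_succ' (fun m => C ((E (n+2) m : ℂ) * (hbar:ℂ) ^ (2*m)) * spow hbar (n+2-2*m)) (n+2)]
      rw [Finset.sum_range_succ' (fun m => C ((E (n+1) m : ℂ) * (hbar:ℂ) ^ (2*m)) * spow hbar (n+1-2*m+1)) (n+2)]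
      have hterm : ∀ i ∈ Finset.range (n+2),
          C ((E (n+2) (i+1) : ℂ) * (hbar:ℂ) ^ (2*(i+1))) * spow hbar (n+2-2*(i+1))
          = C ((E (n+1) (i+1) : ℂ) * (hbar:ℂ) ^ (2*(i+1))) * spow hbar (n+1-2*(i+1)+1)
            - C ((((n:ℂ)+1)^2) * (hbar:ℂ)^2/4)
              * (C ((E n i : ℂ) * (hbar:ℂ) ^ (2*i)) * spow hbar (n-2*i)) := by
        intro i _
        have hrec : E (n+2) (i+1) = E (n+1) (i+1) - (((n:ℝ)+1)^2/4) * E n i := by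
          have h := hErec (n+1) (i+1) (by omega) (by omega)
          simpa using h
        have hidx0 : n+2-2*(i+1) = n-2*i := by omega
        have hmerge : C ((((n:ℂ)+1)^2) * (hbar:ℂ)^2/4)
              * (C (((E n i : ℝ) : ℂ) * (hbar:ℂ)^(2*i)) * spow hbar (n-2*i))
            = C (((((n:ℂ)+1)^2) * (hbar:ℂ)^2/4) * (((E n i : ℝ) : ℂ) * (hbar:ℂ)^(2*i)))
              * spow hbar (n-2*i) := by
          rw [← mul_assoc, ← map_mul]
        rw [hidx0, hmerge]
        by_cases h : 2*i+1 ≤ n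
        · have hidx1 : n+1-2*(i+1)+1 = n-2*i := by omega
          have hc : ((E (n+2) (i+1) : ℝ) : ℂ) * (hbar:ℂ)^(2*(i+1))
              = ((E (n+1) (i+1) : ℝ) : ℂ) * (hbar:ℂ)^(2*(i+1))
                - ((((n:ℂ)+1)^2) * (hbar:ℂ)^2/4) * (((E n i : ℝ) : ℂ) * (hbar:ℂ)^(2*i)) := by
            rw [hrec]; push_cast; ring
          rw [hidx1, hc, map_sub, sub_mul]
        · have hA : E (n+1) (i+1) = 0 := hvan _ _ (by omega)
          have hc : ((E (n+2) (i+1) : ℝ) : ℂ) * (hbar:ℂ)^(2*(i+1))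
              = -(((((n:ℂ)+1)^2) * (hbar:ℂ)^2/4) * (((E n i : ℝ) : ℂ) * (hbar:ℂ)^(2*i))) := by
            rw [hrec, hA]; push_cast; ring
          rw [hc, hA, map_neg]
          push_cast
          simp
      rw [Finset.sum_congr rfl hterm, hE0, hE0, Finset.sum_sub_distrib]
      push_cast
      ring
  intro j
  rw [key j]
  refine (Finset.sum_subset (Finset.range_subset_range.mpr (by omega)) ?_).symm
  intro x hx hx2
  simp only [Finset.mem_range] at hx hx2
  rw [hvan j x (by omega)]
  simp
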